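/- Let g be a finite-dimensional real Lie algebra with a nice basis (e_1, …, e_n) and structure constants c_{ijk} (the coefficient of e_k in ⁅e_i, e_j⁆). If x = (x_1, …, x_n) ∈ ℝⁿ satisfies x_i + x_j = x_k for every triple (i,j,k) with c_{ijk} ≠ 0, then the linear map D : g → g defined by D(e_i) = x_i • e_i is a derivation of g. -/

import Mathlib

/-- The structure constants of a basis of a real Lie algebra. -/
noncomputable def structConst {g : Type*} [LieRing g] [LieAlgebra ℝ g] {n : ℕ}
    (b : Module.Basis (Fin n) ℝ g) (i j k : Fin n) : ℝ :=
  b.repr ⁅b i, b j⁆ k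

/-- A basis of a real Lie algebra is *nice*. -/
def IsNiceBasis {g : Type*} [LieRing g] [LieAlgebra ℝ g] {n : ℕ}
    (b : Module.Basis (Fin n) ℝ g) : Prop :=
  (∀ i j, ∃ (k : Fin n) (c : ℝ), ⁅b i, b j⁆ = c • b k) ∧
  (∀ i k j j', structConst b i j k ≠ 0 → structConst b i j' k ≠ 0 → j = j')

/-- Any element of the kernel of the root matrix of a nice basis defines a diagonal
derivation: if `x_i + x_j = x_k` whenever `c_{ijk} ≠ 0`, then `e_i ↦ x_i • e_i` is a
derivation. -/
theorem diagonal_derivation_of_root_matrix_kernel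
    (g : Type*) [LieRing g] [LieAlgebra ℝ g] [FiniteDimensional ℝ g]
    {n : ℕ} (b : Module.Basis (Fin n) ℝ g) (hb : IsNiceBasis b)
    (x : Fin n → ℝ)
    (hx : ∀ i j k, structConst b i j k ≠ 0 → x i + x j = x k) :
    ∀ u v : g,
      (b.constr ℝ fun i => x i • b i) ⁅u, v⁆ =
        ⁅(b.constr ℝ fun i => x i • b i) u, v⁆ +
        ⁅u, (b.constr ℝ fun i => x i • b i) v⁆ := by
  set D : g →ₗ[ℝ] g := b.constr ℝ fun i => x i • b i with hD
  have hDb : ∀ i, D (b i) = x i • b i := fun i => Module.Basis.constr_basis b ℝ _ i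
  -- the bracket as a bilinear map
  set ad : g →ₗ[ℝ] g →ₗ[ℝ] g := LinearMap.mk₂ ℝ (fun u v => ⁅u, v⁆) add_lie smul_lie lie_add lie_smul with had
  have hadapp : ∀ u v : g, ad u v = ⁅u, v⁆ := fun u v => rfl
  set B₁ : g →ₗ[ℝ] g →ₗ[ℝ] g := (LinearMap.llcomp ℝ g g g D) ∘ₗ ad with hB1
  set B₂ : g →ₗ[ℝ] g →ₗ[ℝ] g := ad ∘ₗ D with hB2
  set B₃ : g →ₗ[ℝ] g →ₗ[ℝ] g := ad.compl₂ D with hB3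
  have key : B₁ = B₂ + B₃ := by
    apply LinearMap.ext_basis b b
    intro i j
    have h1 : B₁ (b i) (b j) = D ⁅b i, b j⁆ := rfl
    have h2 : (B₂ + B₃) (b i) (b j) = ⁅D (b i), b j⁆ + ⁅b i, D (b j)⁆ := rfl
    rw [h1, h2, hDb i, hDb j, lie_smul, smul_lie]
    obtain ⟨k, c, hc⟩ := hb.1 i j
    rcases eq_or_ne c 0 with rfl | hcne
    · simp [hc]
    · have hsc : structConst b i j k = c := by
        rw [structConst, hc]; simp
      have hx' := hx i j k (by rw [hsc]; exact hcne)
      rw [hc]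
      rw [map_smul, hDb k, smul_comm c (x k), ← add_smul, hx']
  intro u v
  have := congrFun (congrArg (fun f => fun u v => f u v) key) u
  have h := congrFun this v
  exact h
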